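/- Let ξ be a nonnegative random variable and W a standard Brownian motion independent of ξ. Let L(t) = sup_{0 ≤ s ≤ t} max(−(ξ + W(s)), 0) be the reflection term of the Skorokhod problem for ξ + W, and set f(t) = E[L(t)]. Then there exist t₀ > 0 and C > 0 such that f(t) ≥ C √(t − t₀) for all t ≥ t₀. -/

import Mathlib

open Set Filter MeasureTheory ProbabilityTheory
open scoped ENNReal NNReal
open Real

/-- A standard (one-dimensional) Brownian motion: starts at zero, has continuous paths,
Gaussian increments of the correct variance, and independent increments over disjoint
intervals. -/
def IsStandardBM {Ω : Type*} [MeasureSpace Ω] (B : ℝ → Ω → ℝ) : Prop :=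
  (∀ ω, B 0 ω = 0) ∧
  (∀ ω, Continuous fun t => B t ω) ∧
  (∀ t : ℝ, Measurable (B t)) ∧
  (∀ s t : ℝ, 0 ≤ s → s ≤ t →
    MeasureTheory.Measure.map (fun ω => B t ω - B s ω) (ℙ : MeasureTheory.Measure Ω) =
      ProbabilityTheory.gaussianReal 0 (Real.toNNReal (t - s))) ∧
  (∀ s t u v : ℝ, 0 ≤ s → s ≤ t → t ≤ u → u ≤ v →
    ProbabilityTheory.IndepFun (fun ω => B t ω - B s ω) (fun ω => B v ω - B u ω)
      (ℙ : MeasureTheory.Measure Ω))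

lemma sSup_image_Icc_eq_iSup {h : ℝ → ℝ} (hc : Continuous h) {t : ℝ} (ht : 0 ≤ t) :
    sSup (h '' Icc 0 t) = ⨆ q : ℚ, (if (q : ℝ) ∈ Icc 0 t then h q else h 0) := by
  have hne : (h '' Icc 0 t).Nonempty := ⟨h 0, mem_image_of_mem h (by simp [ht])⟩
  have hbdd : BddAbove (h '' Icc 0 t) :=
    (isCompact_Icc.image hc).bddAbove
  have hmem : ∀ q : ℚ, (if (q : ℝ) ∈ Icc 0 t then h q else h 0) ∈ h '' Icc 0 t := by
    intro q
    split_ifs with hq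
    · exact mem_image_of_mem h hq
    · exact mem_image_of_mem h (by simp [ht])
  have hbdd' : BddAbove (range fun q : ℚ => if (q : ℝ) ∈ Icc 0 t then h q else h 0) := by
    obtain ⟨b, hb⟩ := hbdd
    exact ⟨b, by rintro x ⟨q, rfl⟩; exact hb (hmem q)⟩
  apply le_antisymm
  · apply csSup_le hne
    rintro a ⟨s, hs, rfl⟩
    -- approximate s by rationals
    apply le_of_forall_pos_le_add
    intro ε hε
    obtain ⟨δ, hδ, hδ'⟩ := Metric.continuous_iff.1 hc s ε hε
    rcases eq_or_lt_of_le ht with rfl | htpos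
    · have : s = 0 := le_antisymm hs.2 hs.1
      subst this
      calc h 0 ≤ (⨆ q : ℚ, if (q : ℝ) ∈ Icc 0 (0:ℝ) then h q else h 0) := by
            have := le_ciSup hbdd' (0 : ℚ)
            simpa using this
        _ ≤ _ + ε := le_add_of_nonneg_right hε.le
    · -- pick a rational in (max 0 (s - δ), min t (s + δ))
      have hab : max 0 (s - δ) < min t (s + δ) := by
        rcases lt_or_ge 0 s with h0s | h0s
        · apply max_lt <;> [skip; skip]
          · exact lt_min (lt_of_lt_of_le h0s hs.2) (lt_of_lt_of_le h0s (le_add_of_nonneg_right hδ.le))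
          · exact lt_min (lt_of_lt_of_le (by linarith) hs.2) (by linarith)
        · have : s = 0 := le_antisymm h0s hs.1
          subst this
          simp only [zero_sub, zero_add, max_eq_left (neg_nonpos.2 hδ.le)]
          exact lt_min htpos hδ
      obtain ⟨q, hq1, hq2⟩ := exists_rat_btwn hab
      have hqIcc : (q : ℝ) ∈ Icc 0 t :=
        ⟨le_of_lt (lt_of_le_of_lt (le_max_left _ _) hq1), le_of_lt (lt_of_lt_of_le hq2 (min_le_left _ _))⟩
      have hdist : dist (q : ℝ) s < δ := by
        rw [Real.dist_eq, abs_lt]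
        constructor
        · have := lt_of_le_of_lt (le_max_right 0 (s - δ)) hq1; linarith
        · have := lt_of_lt_of_le hq2 (min_le_right _ _); linarith
      have : dist (h q) (h s) < ε := hδ' _ hdist
      have h1 : h s ≤ h q + ε := by
        rw [Real.dist_eq, abs_lt] at this; linarith
      calc h s ≤ h q + ε := h1
        _ ≤ _ + ε := by
            gcongr
            have := le_ciSup hbdd' q
            rwa [if_pos hqIcc] at this
  · exact ciSup_le fun q => le_csSup hbdd (hmem q)

lemma lintegral_le_lintegral_pow4 {Ω : Type*} [MeasureSpace Ω]
    [IsProbabilityMeasure (ℙ : Measure Ω)] {g : Ω → ℝ≥0∞} (hg : Measurable g) :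
    ∫⁻ ω, g ω ≤ (∫⁻ ω, (g ω) ^ (4 : ℝ)) ^ ((1 : ℝ)/4) := by
  have hpq : (4 : ℝ).HolderConjugate (4/3) := by
    constructor <;> norm_num
  have h := ENNReal.lintegral_mul_le_Lp_mul_Lq (ℙ : Measure Ω) hpq hg.aemeasurable
    (aemeasurable_const (b := (1 : ℝ≥0∞)))
  simpa [ENNReal.one_rpow, lintegral_const] using h

noncomputable def gaussM4 : ℝ≥0∞ := ∫⁻ x : ℝ, ENNReal.ofReal (x ^ 4) ∂(gaussianReal 0 1)

lemma gaussM4_ne_top : gaussM4 ≠ ⊤ := by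
  have hint : Integrable (fun x : ℝ => x ^ 4) (gaussianReal 0 1) := by
    rw [gaussianReal_of_var_ne_zero 0 one_ne_zero]
    rw [integrable_withDensity_iff (measurable_gaussianPDF 0 1)
      (Eventually.of_forall fun x => ENNReal.ofReal_lt_top)]
    have h1 : Integrable (fun x : ℝ => x ^ 4 * Real.exp (-(2⁻¹ * x ^ 2))) := by
      have := integrable_rpow_mul_exp_neg_mul_sq (by norm_num : (0:ℝ) < 1/2)
          (by norm_num : (-1 : ℝ) < 4)
      have h4 : ∀ x : ℝ, x ^ (4:ℝ) = x ^ (4:ℕ) := fun x => by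
        rw [show (4:ℝ) = ((4:ℕ):ℝ) by norm_num, Real.rpow_natCast]
      simp only [h4] at this
      apply this.congr
      filter_upwards with x
      congr 1
      norm_num
    have h2 := h1.const_mul (√(2 * π * (1:ℝ)))⁻¹
    apply h2.congr
    filter_upwards with x
    rw [gaussianPDF, ENNReal.toReal_ofReal (gaussianPDFReal_nonneg 0 1 x), gaussianPDFReal]
    push_cast
    ring_nf
  have h := hint.2
  rw [hasFiniteIntegral_iff_ofReal (Eventually.of_forall fun x => by positivity)] at h
  exact h.ne

lemma lintegral_pow4_gaussianReal (v : ℝ≥0) :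
    ∫⁻ x : ℝ, ENNReal.ofReal (x ^ 4) ∂(gaussianReal 0 v) =
      ENNReal.ofReal (((v : ℝ)) ^ 2) * gaussM4 := by
  have hmap : (gaussianReal 0 1).map ((Real.sqrt v) * ·) = gaussianReal 0 v := by
    rw [gaussianReal_map_const_mul]
    congr 1
    · ring
    · ext
      simp [Real.sq_sqrt (v.coe_nonneg)]
  have hsq : (√(v:ℝ)) ^ 4 = (v:ℝ) ^ 2 := by
    rw [show (4:ℕ) = 2*2 from rfl, pow_mul, Real.sq_sqrt v.coe_nonneg]
  rw [← hmap, lintegral_map (by fun_prop) (by fun_prop)]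
  rw [gaussM4, ← lintegral_const_mul _ (by fun_prop)]
  congr 1 with x
  rw [← ENNReal.ofReal_mul (by positivity), mul_pow, hsq]

lemma chain_bound {w : ℝ → ℝ} (hw : Continuous w) (h0 : w 0 = 0) {t : ℝ} (ht : 0 < t)
    (D : ℕ → ℝ≥0∞)
    (hD : ∀ k : ℕ, ∀ j : ℕ, j < 2^k →
      ENNReal.ofReal |w (((j:ℝ)+1)*t/2^k) - w ((j:ℝ)*t/2^k)| ≤ D k) :
    ∀ s ∈ Icc (0:ℝ) t, ENNReal.ofReal |w s| ≤ ∑' k, D k := by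
  have key : ∀ n : ℕ, ∀ i : ℕ, i ≤ 2^n →
      ENNReal.ofReal |w ((i:ℝ)*t/2^n)| ≤ ∑ k ∈ Finset.range (n+1), D k := by
    intro n
    induction n with
    | zero =>
      intro i hi
      interval_cases i
      · simpa [h0] using (zero_le _)
      · have := hD 0 0 (by norm_num)
        simp only [Nat.cast_zero, zero_mul, zero_div, h0, sub_zero, Nat.cast_one] at this ⊢
        simpa using this
    | succ n ih =>
      intro i hi
      rcases Nat.even_or_odd i with ⟨j, hj⟩ | ⟨j, hj⟩
      · -- i = 2j
        have hj2 : j ≤ 2^n := by omega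
        have heq : (i:ℝ)*t/2^(n+1) = (j:ℝ)*t/2^n := by
          subst hj; push_cast; ring
        rw [heq]
        exact le_trans (ih j hj2) (Finset.sum_le_sum_of_subset
          (Finset.range_subset_range.2 (by omega)))
      · -- i = 2j+1
        have hjlt : j < 2^n := by omega
        have h2j : 2*j < 2^(n+1) := by omega
        set a : ℝ := (j:ℝ)*t/2^n with ha
        have heqa : ((2*j:ℕ):ℝ)*t/2^(n+1) = a := by push_cast; ring
        have heqb : (i:ℝ)*t/2^(n+1) = (((2*j:ℕ):ℝ)+1)*t/2^(n+1) := by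
          subst hj; push_cast; ring
        have tri : |w ((i:ℝ)*t/2^(n+1))| ≤ |w a| + |w ((i:ℝ)*t/2^(n+1)) - w a| := by
          have := abs_add_le (w a) (w ((i:ℝ)*t/2^(n+1)) - w a)
          simpa using this
        calc ENNReal.ofReal |w ((i:ℝ)*t/2^(n+1))|
            ≤ ENNReal.ofReal (|w a| + |w ((i:ℝ)*t/2^(n+1)) - w a|) :=
              ENNReal.ofReal_le_ofReal tri
          _ ≤ ENNReal.ofReal |w a| + ENNReal.ofReal |w ((i:ℝ)*t/2^(n+1)) - w a| :=
              ENNReal.ofReal_add_le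
          _ ≤ (∑ k ∈ Finset.range (n+1), D k) + D (n+1) := by
              gcongr
              · exact ih j hjlt.le
              · have := hD (n+1) (2*j) h2j
                rw [heqa] at this
                rw [heqb]
                exact this
          _ = ∑ k ∈ Finset.range (n+2), D k := (Finset.sum_range_succ _ _).symm
  intro s hs
  -- dyadic approximation
  set u : ℕ → ℝ := fun n => ((Nat.floor (s * 2^n / t) : ℝ)) * t / 2^n with hu
  have hfl : ∀ n : ℕ, Nat.floor (s * 2^n / t) ≤ 2^n := by
    intro n
    have h1 : s * 2^n / t ≤ ((2^n : ℕ) : ℝ) := by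
      push_cast
      rw [div_le_iff₀ ht]
      nlinarith [hs.2, (by positivity : (0:ℝ) < (2:ℝ)^n)]
    exact le_trans (Nat.floor_mono h1) (le_of_eq (Nat.floor_natCast _))
  have hbound : ∀ n : ℕ, ENNReal.ofReal |w (u n)| ≤ ∑' k, D k := fun n =>
    le_trans (key n _ (hfl n)) (ENNReal.sum_le_tsum _)
  have hnn : ∀ n : ℕ, 0 ≤ s * 2^n / t := fun n => by have h0s := hs.1; positivity
  have hclose : ∀ n : ℕ, s - t/2^n ≤ u n ∧ u n ≤ s := by
    intro n
    have h2 : (0:ℝ) < 2^n := by positivity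
    have hfle : ((⌊s * 2^n / t⌋₊ : ℕ) : ℝ) ≤ s * 2^n / t := Nat.floor_le (hnn n)
    have hflt : s * 2^n / t < (⌊s * 2^n / t⌋₊ : ℝ) + 1 := Nat.lt_floor_add_one _
    have hfle' : ((⌊s * 2^n / t⌋₊ : ℕ) : ℝ) * t ≤ s * 2^n := by
      rw [le_div_iff₀ ht] at hfle; linarith
    have hflt' : s * 2^n < ((⌊s * 2^n / t⌋₊ : ℕ) : ℝ) * t + t := by
      rw [div_lt_iff₀ ht] at hflt; nlinarith
    constructor
    · show s - t/2^n ≤ (⌊s * 2^n / t⌋₊ : ℝ) * t / 2^n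
      rw [sub_le_iff_le_add, ← add_div, le_div_iff₀ h2]
      nlinarith
    · show (⌊s * 2^n / t⌋₊ : ℝ) * t / 2^n ≤ s
      rw [div_le_iff₀ h2]
      exact hfle'
  have hlim : Tendsto u atTop (nhds s) := by
    have h1 : Tendsto (fun n : ℕ => s - t/2^n) atTop (nhds s) := by
      have : Tendsto (fun n : ℕ => t/2^n) atTop (nhds 0) := by
        simpa [div_eq_mul_inv, inv_pow] using
          (tendsto_pow_atTop_nhds_zero_of_lt_one (by norm_num : (0:ℝ) ≤ 2⁻¹)
            (by norm_num : (2⁻¹:ℝ) < 1)).const_mul t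
      simpa using (tendsto_const_nhds (x := s)).sub this
    exact tendsto_of_tendsto_of_tendsto_of_le_of_le h1 tendsto_const_nhds
      (fun n => (hclose n).1) (fun n => (hclose n).2)
  have hcont : Tendsto (fun n => ENNReal.ofReal |w (u n)|) atTop
      (nhds (ENNReal.ofReal |w s|)) := by
    exact (ENNReal.continuous_ofReal.tendsto _).comp
      ((continuous_abs.tendsto _).comp ((hw.tendsto s).comp hlim))
  exact le_of_tendsto hcont (Eventually.of_forall hbound)

lemma integrable_reflection {Ω : Type*} [MeasureSpace Ω]
    [IsProbabilityMeasure (ℙ : Measure Ω)]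
    (ξ : Ω → ℝ) (hξmeas : Measurable ξ) (hξnn : ∀ ω, 0 ≤ ξ ω)
    (W : ℝ → Ω → ℝ) (hWcont : ∀ ω, Continuous fun s => W s ω) (hW0 : ∀ ω, W 0 ω = 0)
    (hWmeas : ∀ s : ℝ, Measurable (W s))
    (hWgauss : ∀ s u : ℝ, 0 ≤ s → s ≤ u →
      Measure.map (fun ω => W u ω - W s ω) (ℙ : Measure Ω) =
        gaussianReal 0 (Real.toNNReal (u - s)))
    {t : ℝ} (ht : 0 < t) :
    Integrable (fun ω => sSup ((fun s => max (-(ξ ω + W s ω)) 0) '' Icc 0 t))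
      (ℙ : Measure Ω) := by
  set F : Ω → ℝ := fun ω => sSup ((fun s => max (-(ξ ω + W s ω)) 0) '' Icc 0 t) with hF
  -- measurability
  have hmeasF : Measurable F := by
    have hrw : F = fun ω => ⨆ q : ℚ,
        (if (q : ℝ) ∈ Icc (0:ℝ) t then max (-(ξ ω + W q ω)) 0
          else max (-(ξ ω + W 0 ω)) 0) := by
      funext ω
      exact sSup_image_Icc_eq_iSup (by
        have := hWcont ω
        fun_prop) ht.le
    rw [hrw]
    refine Measurable.iSup fun q => ?_
    split_ifs with h
    · exact ((hξmeas.add (hWmeas q)).neg.max measurable_const)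
    · exact ((hξmeas.add (hWmeas 0)).neg.max measurable_const)
  -- nonneg and bddAbove facts
  have hcont : ∀ ω, Continuous fun s => max (-(ξ ω + W s ω)) 0 := fun ω => by
    have := hWcont ω; fun_prop
  have hbdd : ∀ ω, BddAbove ((fun s => max (-(ξ ω + W s ω)) 0) '' Icc 0 t) := fun ω =>
    (isCompact_Icc.image (hcont ω)).bddAbove
  have hFnn : ∀ ω, 0 ≤ F ω := by
    intro ω
    have h0mem : (0:ℝ) ∈ (fun s => max (-(ξ ω + W s ω)) 0) '' Icc 0 t := by
      refine ⟨0, by simp [ht.le], ?_⟩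
      simp only [hW0 ω, add_zero]
      exact max_eq_right (neg_nonpos.2 (hξnn ω))
    exact le_csSup (hbdd ω) h0mem
  -- increments
  set X : ℕ → ℕ → Ω → ℝ := fun k j ω => W (((j:ℝ)+1)*t/2^k) ω - W ((j:ℝ)*t/2^k) ω with hX
  have hXmeas : ∀ k j, Measurable (X k j) := fun k j => (hWmeas _).sub (hWmeas _)
  set D : ℕ → Ω → ℝ≥0∞ := fun k ω =>
    (∑ j ∈ Finset.range (2^k), ENNReal.ofReal ((X k j ω) ^ 4)) ^ ((1:ℝ)/4) with hD
  have hDmeas : ∀ k, Measurable (D k) := by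
    intro k
    have hsum : Measurable fun ω => ∑ j ∈ Finset.range (2^k), ENNReal.ofReal ((X k j ω)^4) :=
      Finset.measurable_sum _ fun j _ =>
        (ENNReal.measurable_ofReal.comp ((hXmeas k j).pow_const 4))
    exact ENNReal.continuous_rpow_const.measurable.comp hsum
  -- single increment below D k
  have hsingle : ∀ k j (ω : Ω), j < 2^k → ENNReal.ofReal |X k j ω| ≤ D k ω := by
    intro k j ω hj
    have h1 : ENNReal.ofReal ((X k j ω)^4) = (ENNReal.ofReal |X k j ω|) ^ (4:ℕ) := by
      rw [← ENNReal.ofReal_pow (abs_nonneg _), ← abs_pow]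
      congr 1
      exact (abs_of_nonneg (by positivity)).symm
    have h2 : ENNReal.ofReal |X k j ω| = (ENNReal.ofReal ((X k j ω)^4)) ^ ((1:ℝ)/4) := by
      rw [h1, ← ENNReal.rpow_natCast (ENNReal.ofReal |X k j ω|) 4, ← ENNReal.rpow_mul]
      norm_num
    rw [h2, hD]
    refine ENNReal.rpow_le_rpow ?_ (by norm_num)
    exact Finset.single_le_sum (f := fun j => ENNReal.ofReal ((X k j ω)^4))
      (fun i _ => zero_le) (Finset.mem_range.2 hj)
  -- chaining: majorant for F
  have hchain : ∀ ω, ENNReal.ofReal (F ω) ≤ ∑' k, D k ω := by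
    intro ω
    have hWb := chain_bound (hWcont ω) (hW0 ω) ht (fun k => D k ω)
      (fun k j hj => hsingle k j ω hj)
    by_cases hS : (∑' k, D k ω) = ⊤
    · rw [hS]; exact le_top
    · have hFle : F ω ≤ (∑' k, D k ω).toReal := by
        apply csSup_le ((Set.nonempty_Icc.2 ht.le).image _)
        rintro a ⟨s, hs, rfl⟩
        have hle1 : max (-(ξ ω + W s ω)) 0 ≤ |W s ω| := by
          apply max_le _ (abs_nonneg _)
          have := hξnn ω
          have := neg_le_abs (W s ω)
          linarith
        have hle2 : |W s ω| ≤ (∑' k, D k ω).toReal := by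
          have := hWb s hs
          have h3 := ENNReal.toReal_mono hS this
          rwa [ENNReal.toReal_ofReal (abs_nonneg _)] at h3
        linarith
      calc ENNReal.ofReal (F ω) ≤ ENNReal.ofReal (∑' k, D k ω).toReal :=
            ENNReal.ofReal_le_ofReal hFle
        _ = ∑' k, D k ω := ENNReal.ofReal_toReal hS
  -- integral bound for D k
  set B : ℝ≥0∞ := (ENNReal.ofReal (t^2) * gaussM4) ^ ((1:ℝ)/4) with hB
  set r : ℝ≥0∞ := ((1:ℝ≥0∞)/2) ^ ((1:ℝ)/4) with hr
  have hDint : ∀ k, ∫⁻ ω, D k ω ≤ B * r ^ k := by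
    intro k
    have step1 := lintegral_le_lintegral_pow4 (hDmeas k)
    have hpow : ∀ ω : Ω, (D k ω) ^ (4:ℝ) =
        ∑ j ∈ Finset.range (2^k), ENNReal.ofReal ((X k j ω)^4) := by
      intro ω
      rw [hD]
      dsimp only
      rw [← ENNReal.rpow_mul]
      norm_num
    have step2 : ∫⁻ ω, (D k ω) ^ (4:ℝ) =
        ∑ j ∈ Finset.range (2^k), ∫⁻ ω, ENNReal.ofReal ((X k j ω)^4) := by
      simp_rw [hpow]
      exact lintegral_finset_sum _ fun j _ =>
        ENNReal.measurable_ofReal.comp ((hXmeas k j).pow_const 4)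
    have step3 : ∀ j ∈ Finset.range (2^k),
        ∫⁻ ω, ENNReal.ofReal ((X k j ω)^4) = ENNReal.ofReal ((t/2^k)^2) * gaussM4 := by
      intro j _
      have h2k : (0:ℝ) < 2^k := by positivity
      have h0s : (0:ℝ) ≤ (j:ℝ)*t/2^k := by positivity
      have hsu : (j:ℝ)*t/2^k ≤ ((j:ℝ)+1)*t/2^k := by
        gcongr
        nlinarith
      have hmapX := hWgauss _ _ h0s hsu
      have hrwm : ∫⁻ ω, ENNReal.ofReal ((X k j ω)^4) =
          ∫⁻ x, ENNReal.ofReal (x^4) ∂(Measure.map (X k j) (ℙ : Measure Ω)) :=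
        (lintegral_map (ENNReal.measurable_ofReal.comp (measurable_id.pow_const 4))
          (hXmeas k j)).symm
      rw [hrwm]
      rw [show Measure.map (X k j) (ℙ : Measure Ω) = gaussianReal 0
        (Real.toNNReal (((j:ℝ)+1)*t/2^k - (j:ℝ)*t/2^k)) from hmapX]
      rw [lintegral_pow4_gaussianReal]
      congr 3
      rw [show ((j:ℝ)+1)*t/2^k - (j:ℝ)*t/2^k = t/2^k by ring,
        Real.coe_toNNReal _ (by positivity)]
    have step4 : ∑ j ∈ Finset.range (2^k), (ENNReal.ofReal ((t/2^k)^2) * gaussM4) =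
        ENNReal.ofReal (t^2) * ((1:ℝ≥0∞)/2)^k * gaussM4 := by
      rw [Finset.sum_const, Finset.card_range, nsmul_eq_mul, ← mul_assoc]
      congr 1
      have h1 : ((2^k : ℕ) : ℝ≥0∞) = ENNReal.ofReal ((2:ℝ)^k) := by
        rw [← ENNReal.ofReal_natCast]
        norm_num
      have h2 : ((1:ℝ≥0∞)/2)^k = ENNReal.ofReal ((1/2:ℝ)^k) := by
        rw [ENNReal.ofReal_pow (by norm_num), ENNReal.ofReal_div_of_pos (by norm_num)]
        norm_num
      rw [h1, h2, ← ENNReal.ofReal_mul (by positivity), ← ENNReal.ofReal_mul (by positivity)]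
      congr 1
      field_simp
      rw [← mul_pow]; norm_num
    have hr4 : (((1:ℝ≥0∞)/2)^k) ^ ((1:ℝ)/4) = r ^ k := by
      rw [hr, ← ENNReal.rpow_natCast ((1:ℝ≥0∞)/2) k, ← ENNReal.rpow_mul,
        mul_comm ((k:ℕ):ℝ) ((1:ℝ)/4), ENNReal.rpow_mul, ENNReal.rpow_natCast]
    calc ∫⁻ ω, D k ω ≤ (∫⁻ ω, (D k ω) ^ (4:ℝ)) ^ ((1:ℝ)/4) := step1
      _ = (ENNReal.ofReal (t^2) * ((1:ℝ≥0∞)/2)^k * gaussM4) ^ ((1:ℝ)/4) := by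
          rw [step2, Finset.sum_congr rfl step3, step4]
      _ = B * r ^ k := by
          rw [show ENNReal.ofReal (t^2) * ((1:ℝ≥0∞)/2)^k * gaussM4
              = (ENNReal.ofReal (t^2) * gaussM4) * ((1:ℝ≥0∞)/2)^k by ring,
            ENNReal.mul_rpow_of_nonneg _ _ (by norm_num), hr4, hB]
  have hlint : ∫⁻ ω, ENNReal.ofReal (F ω) ≤ B * (1 - r)⁻¹ := by
    calc ∫⁻ ω, ENNReal.ofReal (F ω) ≤ ∫⁻ ω, ∑' k, D k ω := lintegral_mono hchain
      _ = ∑' k, ∫⁻ ω, D k ω := lintegral_tsum (fun k => (hDmeas k).aemeasurable)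
      _ ≤ ∑' k, B * r ^ k := ENNReal.tsum_le_tsum hDint
      _ = B * ∑' k, r ^ k := ENNReal.tsum_mul_left
      _ = B * (1 - r)⁻¹ := by rw [ENNReal.tsum_geometric]
  have hne : B * (1 - r)⁻¹ ≠ ⊤ := by
    apply ENNReal.mul_ne_top
    · exact ENNReal.rpow_ne_top_of_nonneg (by norm_num)
        (ENNReal.mul_ne_top ENNReal.ofReal_ne_top gaussM4_ne_top)
    · rw [Ne, ENNReal.inv_eq_top, tsub_eq_zero_iff_le]
      exact not_le.2 (ENNReal.rpow_lt_one (by norm_num) (by norm_num))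
  refine ⟨hmeasF.aestronglyMeasurable, ?_⟩
  rw [hasFiniteIntegral_iff_ofReal (Eventually.of_forall hFnn)]
  exact lt_of_le_of_lt hlint (lt_top_iff_ne_top.2 hne)

/-- The expected reflection term `f t = E[sup_{0 ≤ s ≤ t} (ξ + W s)⁻]` of reflected
Brownian motion started from a nonnegative random variable `ξ` grows at least like a
square root: `f t ≥ C √(t − t₀)` for all `t ≥ t₀`, for some `t₀ > 0` and `C > 0`. -/
theorem expected_reflection_sqrt_lower_bound {Ω : Type*} [MeasureSpace Ω]
    [IsProbabilityMeasure (ℙ : Measure Ω)]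
    (ξ : Ω → ℝ) (hξmeas : Measurable ξ) (hξnn : ∀ ω, 0 ≤ ξ ω)
    (W : ℝ → Ω → ℝ) (hW : IsStandardBM W)
    (hindep : IndepFun ξ (fun ω => fun t => W t ω) (ℙ : Measure Ω))
    (L : ℝ → Ω → ℝ)
    (hL : ∀ t : ℝ, 0 ≤ t → ∀ ω, L t ω =
      sSup ((fun s => max (-(ξ ω + W s ω)) 0) '' Set.Icc 0 t))
    (f : ℝ → ℝ) (hf : ∀ t : ℝ, 0 ≤ t → f t = ∫ ω, L t ω) :
    ∃ t₀ > (0 : ℝ), ∃ C > (0 : ℝ), ∀ t ≥ t₀, C * Real.sqrt (t - t₀) ≤ f t := by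
  obtain ⟨hW0, hWcont, hWmeas, hWgauss, -⟩ := hW
  -- choose x₀ with ℙ(ξ ≤ x₀) ≥ 1/2
  obtain ⟨n₀, hn₀⟩ : ∃ n : ℕ, ENNReal.ofReal (1/2) ≤ ℙ {ω | ξ ω ≤ (n:ℝ)} := by
    have hmono : Monotone (fun n : ℕ => {ω | ξ ω ≤ (n:ℝ)}) := by
      intro a b hab ω hω
      simp only [mem_setOf_eq] at hω ⊢
      exact le_trans hω (by exact_mod_cast hab)
    have hunion : (⋃ n : ℕ, {ω | ξ ω ≤ (n:ℝ)}) = univ := by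
      ext ω
      simp only [mem_iUnion, mem_setOf_eq, mem_univ, iff_true]
      obtain ⟨n, hn⟩ := exists_nat_ge (ξ ω)
      exact ⟨n, hn⟩
    have hconv := tendsto_measure_iUnion_atTop (μ := (ℙ : Measure Ω)) hmono
    rw [hunion, measure_univ] at hconv
    have hlt : ENNReal.ofReal (1/2) < 1 := by
      rw [show (1:ℝ≥0∞) = ENNReal.ofReal 1 by simp]
      exact ENNReal.ofReal_lt_ofReal_iff_of_nonneg (by norm_num) |>.2 (by norm_num)
    have := hconv.eventually (eventually_ge_nhds hlt)
    exact this.exists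
  set x₀ : ℝ := (n₀ : ℝ) with hx₀
  have hx₀nn : 0 ≤ x₀ := Nat.cast_nonneg _
  -- positive gaussian tail constant
  set ν : Measure ℝ := gaussianReal 0 1 with hν
  set c₁ : ℝ≥0∞ := ν (Iic (-1:ℝ)) with hc₁
  have hc₁pos : 0 < c₁ := by
    rw [hc₁, hν, gaussianReal_apply 0 one_ne_zero]
    rw [setLIntegral_pos_iff (measurable_gaussianPDF 0 1)]
    have hsupp : Function.support (gaussianPDF 0 1) = univ := by
      ext x
      simp [Function.mem_support, (gaussianPDF_pos 0 one_ne_zero x).ne']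
    rw [hsupp, univ_inter]
    simp [Real.volume_Iic]
  have hc₁top : c₁ ≠ ⊤ := by
    rw [hc₁]
    exact (measure_lt_top ν _).ne
  set c : ℝ := c₁.toReal with hc
  have hcpos : 0 < c := ENNReal.toReal_pos hc₁pos.ne' hc₁top
  -- final data
  refine ⟨4*x₀^2 + 1, by positivity, c/4, by positivity, ?_⟩
  intro t htt
  set t₀ : ℝ := 4*x₀^2 + 1 with ht₀
  have ht : (0:ℝ) < t := by nlinarith
  -- the law of W t
  have hlaw : Measure.map (W t) (ℙ : Measure Ω) = gaussianReal 0 (Real.toNNReal t) := by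
    have h := hWgauss 0 t le_rfl ht.le
    have heq : (fun ω => W t ω - W 0 ω) = W t := funext fun ω => by rw [hW0 ω, sub_zero]
    rw [heq, sub_zero] at h
    exact h
  -- ℙ(W t ≤ -√t) = c₁
  have hsqrtpos : 0 < Real.sqrt t := Real.sqrt_pos.2 ht
  have hPW : ℙ {ω | W t ω ≤ -Real.sqrt t} = c₁ := by
    have h1 : {ω | W t ω ≤ -Real.sqrt t} = W t ⁻¹' (Iic (-Real.sqrt t)) := rfl
    rw [h1, ← Measure.map_apply (hWmeas t) measurableSet_Iic, hlaw]
    have hmap : ν.map ((Real.sqrt t) * ·) = gaussianReal 0 (Real.toNNReal t) := by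
      rw [hν, gaussianReal_map_const_mul]
      congr 1
      · ring
      · ext
        simp [Real.sq_sqrt ht.le, Real.coe_toNNReal _ ht.le]
    rw [← hmap, Measure.map_apply (measurable_const_mul _) measurableSet_Iic]
    congr 1
    ext x
    simp only [mem_preimage, mem_Iic]
    constructor <;> intro h <;> nlinarith
  -- independence of ξ and W t
  have hiW : IndepFun ξ (W t) (ℙ : Measure Ω) :=
    hindep.comp measurable_id (measurable_pi_apply t)
  have hPA : ℙ ({ω | ξ ω ≤ x₀} ∩ {ω | W t ω ≤ -Real.sqrt t})
      = ℙ {ω | ξ ω ≤ x₀} * c₁ := by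
    rw [← hPW]
    exact hiW.measure_inter_preimage_eq_mul _ _ measurableSet_Iic measurableSet_Iic
  set A : Set Ω := {ω | ξ ω ≤ x₀} ∩ {ω | W t ω ≤ -Real.sqrt t} with hA
  have hAmeas : MeasurableSet A :=
    (measurableSet_Iic.preimage hξmeas).inter (measurableSet_Iic.preimage (hWmeas t))
  set Ft : Ω → ℝ := fun ω => sSup ((fun s => max (-(ξ ω + W s ω)) 0) '' Icc 0 t) with hFt
  have hLt : (fun ω => L t ω) = Ft := funext fun ω => hL t ht.le ω
  have hint : Integrable Ft (ℙ : Measure Ω) :=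
    integrable_reflection ξ hξmeas hξnn W hWcont hW0 hWmeas hWgauss ht
  have hbddA : ∀ ω, BddAbove ((fun s => max (-(ξ ω + W s ω)) 0) '' Icc 0 t) := fun ω =>
    (isCompact_Icc.image (by have := hWcont ω; fun_prop)).bddAbove
  have hFtnn : ∀ ω, 0 ≤ Ft ω := by
    intro ω
    refine le_csSup (hbddA ω) ⟨0, by simp [ht.le], ?_⟩
    simp only [hW0 ω, add_zero]
    exact max_eq_right (neg_nonpos.2 (hξnn ω))
  have hpt : ∀ ω, A.indicator (fun _ => Real.sqrt t - x₀) ω ≤ Ft ω := by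
    intro ω
    by_cases hω : ω ∈ A
    · rw [indicator_of_mem hω]
      obtain ⟨h1, h2⟩ := hω
      simp only [mem_setOf_eq] at h1 h2
      have h3 : Real.sqrt t - x₀ ≤ max (-(ξ ω + W t ω)) 0 :=
        le_trans (by linarith) (le_max_left _ _)
      exact le_trans h3 (le_csSup (hbddA ω) ⟨t, by simp [ht.le], rfl⟩)
    · rw [indicator_of_notMem hω]
      exact hFtnn ω
  have hgint : Integrable (A.indicator fun _ => Real.sqrt t - x₀) (ℙ : Measure Ω) :=
    (integrable_const _).indicator hAmeas
  have hle := integral_mono hgint hint hpt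
  rw [integral_indicator_const _ hAmeas, smul_eq_mul] at hle
  -- numeric endgame
  have hP1 : 1/2 ≤ (ℙ {ω | ξ ω ≤ x₀}).toReal := by
    have h := ENNReal.toReal_mono (measure_ne_top ℙ _) hn₀
    rwa [ENNReal.toReal_ofReal (by norm_num)] at h
  have hPAr : 1/2 * c ≤ (ℙ A).toReal := by
    rw [hA, hPA, ENNReal.toReal_mul]
    have : (0:ℝ) ≤ c := hcpos.le
    have h2 : (ℙ {ω | ξ ω ≤ x₀}).toReal * c₁.toReal ≥ 1/2 * c₁.toReal :=
      mul_le_mul_of_nonneg_right hP1 ENNReal.toReal_nonneg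
    exact h2
  have hsq1 : 2*x₀ ≤ Real.sqrt t := by
    have h4 : (2*x₀)^2 ≤ t := by nlinarith
    calc 2*x₀ = Real.sqrt ((2*x₀)^2) := (Real.sqrt_sq (by positivity)).symm
      _ ≤ Real.sqrt t := Real.sqrt_le_sqrt h4
  have hsq2 : Real.sqrt (t - t₀) ≤ Real.sqrt t := Real.sqrt_le_sqrt (by nlinarith [sq_nonneg x₀])
  have hsqnn : 0 ≤ Real.sqrt t := Real.sqrt_nonneg t
  have hsub : Real.sqrt t / 2 ≤ Real.sqrt t - x₀ := by linarith
  have hfeq : f t = ∫ ω, Ft ω := by rw [hf t ht.le]; exact congrArg _ hLt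
  rw [hfeq]
  calc c/4 * Real.sqrt (t - t₀)
      ≤ c/4 * Real.sqrt t := by
        apply mul_le_mul_of_nonneg_left hsq2 (by positivity)
    _ ≤ (1/2 * c) * (Real.sqrt t - x₀) := by nlinarith
    _ ≤ (ℙ A).toReal * (Real.sqrt t - x₀) :=
        mul_le_mul_of_nonneg_right hPAr (by linarith)
    _ ≤ ∫ ω, Ft ω := hle
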